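/- Fix an integer t ≥ 0, k = 2t+1, and a real α ∈ [0,1]. Suppose c : ℕ → ℝ satisfies c(n) ≥ 0 for n ≤ k and, for all n > k, c(n) = Σ_{j=0}^{n−1} p_n(j)·(A_1(j)+A_2(j))·c(j) + t(n), where the toll function satisfies |t(n)| ≤ C·n^{δ} for a constant C and all n > k. If δ ∈ (0,1), then c(n) = O(n^{δ}); if δ = 0 (i.e., the toll is bounded), then c(n) = O(log n). -/

import Mathlib

open scoped Classical

/-- The beta function `B(a,b) = ∫_0^1 z^(a-1) (1-z)^(b-1) dz`. -/
noncomputable def betaFun (a b : ℝ) : ℝ := ∫ z in (0:ℝ)..1, z ^ (a - 1) * (1 - z) ^ (b - 1)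

/-- The regularized incomplete beta function `I_{x,y}(a,b)`. -/
noncomputable def regIncBeta (x y a b : ℝ) : ℝ :=
  (∫ z in x..y, z ^ (a - 1) * (1 - z) ^ (b - 1)) / betaFun a b

/-- The probability `P(I = i)` for `I ~ BetaBin(n,a,b)`. -/
noncomputable def betaBinPMF (n : ℕ) (a b : ℝ) (i : ℕ) : ℝ :=
  (n.choose i : ℝ) * betaFun (a + i) (b + ((n - i : ℕ) : ℝ)) / betaFun a b

/-- The `m`-th harmonic number. -/
noncomputable def harm (m : ℕ) : ℝ := ∑ i ∈ Finset.range m, (1 : ℝ) / (i + 1)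

/-- `p_n(j) = P(t + I = j)` for `I ~ BetaBin(n-k, t+1, t+1)`, `k = 2t+1`. -/
noncomputable def pnn (t n j : ℕ) : ℝ :=
  if t ≤ j then betaBinPMF (n - (2 * t + 1)) ((t : ℝ) + 1) ((t : ℝ) + 1) (j - t) else 0

/-- The indicator `A₁(j)` (with `j' = (n-1)-j` and `T = (n-1)/(1+α)`):
`[j ≤ T ∧ j' ≤ T ∧ j ≤ j'] + [j > T]`. -/
noncomputable def indA1 (α : ℝ) (n j : ℕ) : ℝ :=
  (if (j : ℝ) ≤ ((n : ℝ) - 1) / (1 + α) ∧ ((n : ℝ) - 1 - j) ≤ ((n : ℝ) - 1) / (1 + α)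
      ∧ (j : ℝ) ≤ (n : ℝ) - 1 - j then 1 else 0)
  + (if ((n : ℝ) - 1) / (1 + α) < (j : ℝ) then 1 else 0)

/-- The indicator `A₂(j)` (with `j' = (n-1)-j` and `T = (n-1)/(1+α)`):
`[j ≤ T ∧ j' ≤ T ∧ j < j'] + [j > T]`. -/
noncomputable def indA2 (α : ℝ) (n j : ℕ) : ℝ :=
  (if (j : ℝ) ≤ ((n : ℝ) - 1) / (1 + α) ∧ ((n : ℝ) - 1 - j) ≤ ((n : ℝ) - 1) / (1 + α)
      ∧ (j : ℝ) < (n : ℝ) - 1 - j then 1 else 0)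
  + (if ((n : ℝ) - 1) / (1 + α) < (j : ℝ) then 1 else 0)


noncomputable def Bnat (p q : ℕ) : ℝ := ∫ z in (0:ℝ)..1, z ^ p * (1 - z) ^ q

lemma Bnat_cont (p q : ℕ) : Continuous (fun z : ℝ => z ^ p * (1 - z) ^ q) := by
  fun_prop

lemma Bnat_base (p : ℕ) : Bnat p 0 = 1 / (p + 1) := by
  simp only [Bnat, pow_zero, mul_one, integral_pow]
  norm_num

lemma Bnat_ibp (p q : ℕ) :
    ((p:ℝ) + 1) * Bnat p (q + 1) = ((q:ℝ) + 1) * Bnat (p + 1) q := by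
  have key : ∫ z in (0:ℝ)..1,
      (((p:ℝ)+1) * (z ^ p * (1 - z) ^ (q+1)) - ((q:ℝ)+1) * (z ^ (p+1) * (1 - z) ^ q)) = 0 := by
    have h : ∀ x ∈ Set.uIcc (0:ℝ) 1, HasDerivAt (fun z : ℝ => z ^ (p+1) * (1 - z) ^ (q+1))
        (((p:ℝ)+1) * (x ^ p * (1 - x) ^ (q+1)) - ((q:ℝ)+1) * (x ^ (p+1) * (1 - x) ^ q)) x := by
      intro x _
      have h1 : HasDerivAt (fun z : ℝ => z ^ (p+1)) (((p:ℝ)+1) * x ^ p) x := by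
        simpa using hasDerivAt_pow (p+1) x
      have h2 : HasDerivAt (fun z : ℝ => (1 - z) ^ (q+1)) (-(((q:ℝ)+1) * (1 - x) ^ q)) x := by
        have h3 : HasDerivAt (fun z : ℝ => 1 - z) (-1) x := by
          simpa using (hasDerivAt_id x).const_sub 1
        have := (hasDerivAt_pow (q+1) (1 - x)).comp x h3
        refine this.congr_deriv ?_
        push_cast
        ring
      have := h1.mul h2
      refine this.congr_deriv ?_
      push_cast
      ring
    have hint : IntervalIntegrable (fun x : ℝ =>
        (((p:ℝ)+1) * (x ^ p * (1 - x) ^ (q+1)) - ((q:ℝ)+1) * (x ^ (p+1) * (1 - x) ^ q)))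
        MeasureTheory.volume 0 1 := by
      apply Continuous.intervalIntegrable; fun_prop
    rw [intervalIntegral.integral_eq_sub_of_hasDerivAt h hint]
    norm_num
  have hi1 : IntervalIntegrable (fun z : ℝ => ((p:ℝ)+1) * (z ^ p * (1 - z) ^ (q+1)))
      MeasureTheory.volume 0 1 := by apply Continuous.intervalIntegrable; fun_prop
  have hi2 : IntervalIntegrable (fun z : ℝ => ((q:ℝ)+1) * (z ^ (p+1) * (1 - z) ^ q))
      MeasureTheory.volume 0 1 := by apply Continuous.intervalIntegrable; fun_prop
  rw [intervalIntegral.integral_sub hi1 hi2] at key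
  rw [intervalIntegral.integral_const_mul, intervalIntegral.integral_const_mul] at key
  unfold Bnat
  linarith

lemma Bnat_eq (p q : ℕ) : Bnat p q = (p.factorial * q.factorial : ℝ) / (p + q + 1).factorial := by
  induction q generalizing p with
  | zero =>
    have : ((p:ℝ)+1) ≠ 0 := by positivity
    have h2 : (p.factorial : ℝ) ≠ 0 := by positivity
    simp [Bnat_base, Nat.factorial_succ]
    field_simp
  | succ q ih =>
    have h := Bnat_ibp p q
    have hp1 : ((p:ℝ) + 1) ≠ 0 := by positivity
    have : Bnat p (q+1) = ((q:ℝ)+1) * Bnat (p+1) q / ((p:ℝ)+1) := by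
      field_simp at h ⊢; linarith
    rw [this, ih (p+1)]
    have e1 : (p + 1 + q + 1) = (p + (q+1) + 1) := by ring
    rw [e1]
    push_cast [Nat.factorial_succ (p), Nat.factorial_succ q]
    have h2 : ((p + (q+1) + 1).factorial : ℝ) ≠ 0 := by positivity
    field_simp

lemma betaFun_nat (p q : ℕ) : betaFun ((p:ℝ) + 1) ((q:ℝ) + 1) = Bnat p q := by
  unfold betaFun Bnat
  apply intervalIntegral.integral_congr
  intro z _
  have e1 : ((p:ℝ) + 1) - 1 = ((p:ℕ):ℝ) := by push_cast; ring
  have e2 : ((q:ℝ) + 1) - 1 = ((q:ℕ):ℝ) := by push_cast; ring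
  simp only [e1, e2]
  rw [Real.rpow_natCast, Real.rpow_natCast]

lemma betaBinPMF_eq (m : ℕ) (t : ℕ) (i : ℕ) :
    betaBinPMF m ((t:ℝ)+1) ((t:ℝ)+1) i
      = (m.choose i : ℝ) * Bnat (t + i) (t + (m - i)) / Bnat t t := by
  unfold betaBinPMF
  rw [show ((t:ℝ)+1+(i:ℕ)) = (((t+i:ℕ)):ℝ) + 1 by push_cast; ring,
      show ((t:ℝ)+1+((m-i:ℕ):ℝ)) = (((t+(m-i):ℕ)):ℝ) + 1 by push_cast; ring,
      betaFun_nat, betaFun_nat]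

lemma Bnat_pos (p q : ℕ) : 0 < Bnat p q := by
  rw [Bnat_eq]; positivity

lemma Bnat_symm (p q : ℕ) : Bnat p q = Bnat q p := by
  rw [Bnat_eq, Bnat_eq]
  rw [show q + p + 1 = p + q + 1 by ring]
  ring

lemma Bnat_pascal (a b : ℕ) : Bnat a b = Bnat (a+1) b + Bnat a (b+1) := by
  rw [Bnat_eq, Bnat_eq, Bnat_eq]
  rw [show a + 1 + b + 1 = a + b + 2 by ring, show a + (b+1) + 1 = a + b + 2 by ring]
  have h1 : ((a+b+2).factorial : ℝ) = (a+b+2) * (a+b+1).factorial := by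
    rw [show a+b+2 = (a+b+1)+1 by ring, Nat.factorial_succ]; push_cast; ring
  rw [Nat.factorial_succ a, Nat.factorial_succ b, h1]
  have h2 : ((a+b+1).factorial : ℝ) ≠ 0 := by positivity
  field_simp
  push_cast
  ring

lemma Bnat_sum (m : ℕ) : ∀ a b : ℕ,
    ∑ i ∈ Finset.range (m+1), (m.choose i : ℝ) * Bnat (a + i) (b + (m - i)) = Bnat a b := by
  induction m with
  | zero => intro a b; simp
  | succ m ih =>
    intro a b
    rw [Finset.sum_range_succ']
    have key : ∀ k ∈ Finset.range (m+1),
        ((m+1).choose (k+1) : ℝ) * Bnat (a + (k+1)) (b + (m + 1 - (k+1)))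
        = (m.choose k : ℝ) * Bnat ((a+1) + k) (b + (m - k))
          + (m.choose (k+1) : ℝ) * Bnat (a + (k+1)) (b + (m - k)) := by
      intro k _
      rw [Nat.choose_succ_succ m k]
      push_cast [Nat.succ_eq_add_one]
      rw [show a + (k+1) = a + 1 + k by ring]
      ring
    rw [Finset.sum_congr rfl key, Finset.sum_add_distrib]
    have e2 : ∑ k ∈ Finset.range (m+1), (m.choose (k+1) : ℝ) * Bnat (a + (k+1)) (b + (m - k))
          + ((m+1).choose 0 : ℝ) * Bnat (a + 0) (b + (m + 1 - 0))
        = ∑ i ∈ Finset.range (m+1), (m.choose i : ℝ) * Bnat (a + i) ((b+1) + (m - i)) := by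
      conv_rhs => rw [Finset.sum_range_succ']
      conv_lhs => rw [Finset.sum_range_succ]
      rw [Nat.choose_succ_self, Nat.cast_zero, zero_mul, add_zero]
      congr 1
      · apply Finset.sum_congr rfl
        intro k hk
        simp only [Finset.mem_range] at hk
        congr 2
        omega
      · simp only [Nat.choose_zero_right, Nat.cast_one, one_mul, add_zero]
        rw [show b + (m + 1 - 0) = b + 1 + (m - 0) by omega]
    rw [add_assoc, e2, ih (a+1) b, ih a (b+1), ← Bnat_pascal]

lemma Bnat_ratio (t : ℕ) : Bnat (t+2) t / Bnat t t = ((t:ℝ)+2) / (2*(2*(t:ℝ)+3)) := by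
  rw [Bnat_eq, Bnat_eq]
  rw [show t + 2 + t + 1 = (2*t+2) + 1 by ring, show t + t + 1 = 2*t+1 by ring]
  rw [Nat.factorial_succ (2*t+2), Nat.factorial_succ (2*t+1), Nat.factorial_succ (t+1),
      Nat.factorial_succ t]
  have h1 : ((2*t+1).factorial : ℝ) ≠ 0 := by positivity
  have h2 : ((t).factorial : ℝ) ≠ 0 := by positivity
  field_simp
  push_cast
  ring

lemma choose_sq (m k : ℕ) :
    m.choose (k+2) * ((k+2) * (k+1)) = (m * (m-1)) * ((m-2).choose k) := by
  match m with
  | 0 =>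
    have h : Nat.choose 0 (k+2) = 0 := Nat.choose_eq_zero_of_lt (by omega)
    simp [h]
  | 1 =>
    have h : Nat.choose 1 (k+2) = 0 := Nat.choose_eq_zero_of_lt (by omega)
    simp [h]
  | (m'+2) =>
    have h1 := Nat.add_one_mul_choose_eq (m'+1) (k+1)
    have h2 := Nat.add_one_mul_choose_eq m' k
    have e : (m'+2) - 2 = m' := by omega
    rw [e]
    calc (m'+2).choose (k+2) * ((k+2) * (k+1))
        = ((m'+2).choose (k+2) * (k+2)) * (k+1) := by ring
      _ = ((m'+2) * (m'+1).choose (k+1)) * (k+1) := by rw [← h1]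
      _ = (m'+2) * ((m'+1).choose (k+1) * (k+1)) := by ring
      _ = (m'+2) * ((m'+1) * m'.choose k) := by rw [← h2]
      _ = ((m'+2) * ((m'+2)-1)) * m'.choose k := by rw [show (m'+2)-1 = m'+1 by omega]; ring

section qq
variable (t m : ℕ)

noncomputable def qq (i : ℕ) : ℝ := (m.choose i : ℝ) * Bnat (t + i) (t + (m - i)) / Bnat t t

lemma qq_nonneg (i : ℕ) : 0 ≤ qq t m i := by
  unfold qq
  have := Bnat_pos (t+i) (t+(m-i))
  have := Bnat_pos t t
  positivity

lemma qq_sum : ∑ i ∈ Finset.range (m+1), qq t m i = 1 := by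
  unfold qq
  rw [← Finset.sum_div, Bnat_sum m t t, div_self (Bnat_pos t t).ne']

lemma qq_symm (i : ℕ) (hi : i ≤ m) : qq t m (m - i) = qq t m i := by
  unfold qq
  rw [Nat.choose_symm hi, show m - (m - i) = i by omega, Bnat_symm (t+(m-i)) (t+i)]

lemma qq_mom1 : ∑ i ∈ Finset.range (m+1), qq t m i * i = (m:ℝ)/2 := by
  have hrefl := Finset.sum_range_reflect (fun i => qq t m i * i) (m+1)
  have e : ∀ i ∈ Finset.range (m+1),
      qq t m (m + 1 - 1 - i) * ((m + 1 - 1 - i : ℕ):ℝ) = qq t m i * ((m:ℝ) - i) := by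
    intro i hi
    simp only [Finset.mem_range] at hi
    rw [show m + 1 - 1 - i = m - i by omega, qq_symm t m i (by omega)]
    congr 1
    push_cast [Nat.cast_sub (by omega : i ≤ m)]
    ring
  rw [Finset.sum_congr rfl e] at hrefl
  have : 2 * ∑ i ∈ Finset.range (m+1), qq t m i * i
      = ∑ i ∈ Finset.range (m+1), qq t m i * (m:ℝ) := by
    rw [two_mul]
    nth_rewrite 1 [← hrefl]
    rw [← Finset.sum_add_distrib]
    apply Finset.sum_congr rfl
    intro i _
    ring
  rw [← Finset.sum_mul, qq_sum, one_mul] at this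
  linarith

lemma qq_mom2 : ∑ i ∈ Finset.range (m+1), qq t m i * i * ((i:ℝ) - 1)
    = (m:ℝ) * ((m:ℝ)-1) * ((t:ℝ)+2) / (2*(2*(t:ℝ)+3)) := by
  match m with
  | 0 => simp
  | 1 =>
    rw [Finset.sum_range_succ, Finset.sum_range_one]
    norm_num
  | (m'+2) =>
    rw [show m'+2+1 = (m'+1)+1+1 by ring, Finset.sum_range_succ', Finset.sum_range_succ']
    simp only [Nat.cast_zero, Nat.cast_one, mul_zero, zero_mul, add_zero, sub_self, mul_one]
    have e : ∀ i ∈ Finset.range (m'+1),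
        qq t (m'+2) (i+1+1) * ((i+1+1:ℕ):ℝ) * (((i+1+1:ℕ):ℝ) - 1)
        = ((m'+2:ℕ):ℝ) * ((m'+1:ℕ):ℝ) * ((m'.choose i : ℝ) * Bnat ((t+2) + i) (t + (m' - i)) / Bnat t t) := by
      intro i hi
      simp only [Finset.mem_range] at hi
      unfold qq
      have hc := choose_sq (m'+2) i
      rw [show (m'+2)-1 = m'+1 by omega, show (m'+2)-2 = m' by omega] at hc
      have hc' : ((m'+2).choose (i+2) : ℝ) * (((i:ℝ)+2) * ((i:ℝ)+1))
          = (((m':ℝ)+2) * ((m':ℝ)+1)) * ((m'.choose i : ℝ)) := by exact_mod_cast hc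
      rw [show i+1+1 = i+2 by ring]
      rw [show t + (i+2) = (t+2) + i by ring, show (m'+2) - (i+2) = m' - i by omega]
      push_cast
      linear_combination (Bnat ((t+2)+i) (t+(m'-i)) / Bnat t t) * hc'
    rw [Finset.sum_congr rfl e]
    have hz1 : qq t (m'+2) (0+1) * ((0+1:ℕ):ℝ) * (((0+1:ℕ):ℝ) - 1) = 0 := by norm_num
    have hz0 : qq t (m'+2) 0 * ((0:ℕ):ℝ) * (((0:ℕ):ℝ) - 1) = 0 := by norm_num
    rw [hz1, add_zero, ← Finset.mul_sum, ← Finset.sum_div, Bnat_sum m' (t+2) t, Bnat_ratio t]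
    push_cast
    ring
end qq

lemma qq_var (t m : ℕ) : ∑ i ∈ Finset.range (m+1), qq t m i * ((i:ℝ) - m/2)^2
    ≤ (m:ℝ)^2/12 + (m:ℝ)/2 := by
  have key : ∑ i ∈ Finset.range (m+1), qq t m i * ((i:ℝ) - m/2)^2
      = (m:ℝ) * ((m:ℝ)-1) * ((t:ℝ)+2) / (2*(2*(t:ℝ)+3))
        + (1 - (m:ℝ)) * ((m:ℝ)/2) + (m:ℝ)^2/4 * 1 := by
    have e : ∀ i ∈ Finset.range (m+1), qq t m i * ((i:ℝ) - m/2)^2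
        = qq t m i * (i:ℝ) * ((i:ℝ)-1) + (1 - (m:ℝ)) * (qq t m i * (i:ℝ))
          + (m:ℝ)^2/4 * qq t m i := by
      intro i _; ring
    rw [Finset.sum_congr rfl e, Finset.sum_add_distrib, Finset.sum_add_distrib,
        ← Finset.mul_sum, ← Finset.mul_sum, qq_mom2, qq_mom1, qq_sum]
  rw [key]
  have ht : ((t:ℝ)+2) / (2*(2*(t:ℝ)+3)) ≤ 1/3 := by
    rw [div_le_iff₀ (by positivity)]
    have : (0:ℝ) ≤ t := Nat.cast_nonneg t
    linarith
  have hm2 : (0:ℝ) ≤ (m:ℝ) * ((m:ℝ)-1) := by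
    rcases Nat.eq_zero_or_pos m with rfl | hm
    · norm_num
    · have : (1:ℝ) ≤ m := by exact_mod_cast hm
      nlinarith
  have h1 : (m:ℝ) * ((m:ℝ)-1) * (((t:ℝ)+2) / (2*(2*(t:ℝ)+3))) ≤ (m:ℝ) * ((m:ℝ)-1) * (1/3) :=
    mul_le_mul_of_nonneg_left ht hm2
  rw [mul_div_assoc]
  nlinarith [Nat.cast_nonneg (α := ℝ) m]

lemma qq_absdev (t m : ℕ) (hm : 1 ≤ m) :
    ∑ i ∈ Finset.range (m+1), qq t m i * |(i:ℝ) - m/2| ≤ 7*(m:ℝ)/24 + 1 := by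
  have hm0 : (0:ℝ) < m := by exact_mod_cast hm
  have pt : ∀ x : ℝ, |x| ≤ (m:ℝ)/8 + 2*x^2/m := by
    intro x
    rw [show (m:ℝ)/8 + 2*x^2/m = ((m:ℝ)^2/8 + 2*x^2)/m by field_simp, le_div_iff₀ hm0]
    nlinarith [sq_nonneg (|x| - (m:ℝ)/4), sq_abs x, abs_nonneg x]
  calc ∑ i ∈ Finset.range (m+1), qq t m i * |(i:ℝ) - m/2|
      ≤ ∑ i ∈ Finset.range (m+1), (qq t m i * ((m:ℝ)/8)
          + (2/(m:ℝ)) * (qq t m i * ((i:ℝ) - m/2)^2)) := by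
        apply Finset.sum_le_sum
        intro i _
        have h := pt ((i:ℝ) - m/2)
        have hq := qq_nonneg t m i
        have := mul_le_mul_of_nonneg_left h hq
        calc qq t m i * |(i:ℝ) - m/2| ≤ qq t m i * ((m:ℝ)/8 + 2*((i:ℝ) - m/2)^2/m) := this
          _ = qq t m i * ((m:ℝ)/8) + (2/(m:ℝ)) * (qq t m i * ((i:ℝ) - m/2)^2) := by
              field_simp
    _ = (∑ i ∈ Finset.range (m+1), qq t m i) * ((m:ℝ)/8)
        + (2/(m:ℝ)) * ∑ i ∈ Finset.range (m+1), qq t m i * ((i:ℝ) - m/2)^2 := by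
        rw [Finset.sum_add_distrib, ← Finset.sum_mul, ← Finset.mul_sum]
    _ ≤ 1 * ((m:ℝ)/8) + (2/(m:ℝ)) * ((m:ℝ)^2/12 + (m:ℝ)/2) := by
        rw [qq_sum]
        have := mul_le_mul_of_nonneg_left (qq_var t m) (by positivity : (0:ℝ) ≤ 2/(m:ℝ))
        linarith
    _ ≤ 7*(m:ℝ)/24 + 1 := by
        rw [show (2/(m:ℝ)) * ((m:ℝ)^2/12 + (m:ℝ)/2) = (m:ℝ)/6 + 1 by field_simp; ring]
        linarith

lemma qq_zero (t m i : ℕ) (hi : m < i) : qq t m i = 0 := by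
  unfold qq
  rw [Nat.choose_eq_zero_of_lt hi]
  simp

lemma betaBinPMF_qq (m t i : ℕ) : betaBinPMF m ((t:ℝ)+1) ((t:ℝ)+1) i = qq t m i :=
  betaBinPMF_eq m t i

section pnnsec
variable (t n : ℕ)

lemma pnn_transfer (g : ℕ → ℝ) (hn : 2*t+1 < n) :
    ∑ j ∈ Finset.range n, pnn t n j * g j
      = ∑ i ∈ Finset.range ((n - (2*t+1))+1), qq t (n - (2*t+1)) i * g (t+i) := by
  set m := n - (2*t+1) with hm
  have hsub : Finset.Ico t (t+m+1) ⊆ Finset.range n := by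
    intro j hj
    simp only [Finset.mem_Ico] at hj
    simp only [Finset.mem_range]
    omega
  have hzero : ∀ j ∈ Finset.range n, j ∉ Finset.Ico t (t+m+1) → pnn t n j * g j = 0 := by
    intro j _ hj
    simp only [Finset.mem_Ico, not_and, not_lt] at hj
    unfold pnn
    rcases le_or_gt t j with h | h
    · rw [if_pos h, betaBinPMF_qq, qq_zero t m (j-t) (by omega)]
      ring
    · rw [if_neg (by omega)]
      ring
  rw [← Finset.sum_subset hsub hzero, Finset.sum_Ico_eq_sum_range]
  rw [show t + m + 1 - t = m + 1 by omega]
  apply Finset.sum_congr rfl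
  intro i _
  unfold pnn
  rw [if_pos (by omega : t ≤ t + i), show t + i - t = i by omega, betaBinPMF_qq]

lemma pnn_nonneg (j : ℕ) : 0 ≤ pnn t n j := by
  unfold pnn
  split
  · rw [betaBinPMF_qq]; exact qq_nonneg _ _ _
  · exact le_refl 0
end pnnsec

lemma cast_sub1 (n j : ℕ) (h : j < n) : ((n-1-j:ℕ):ℝ) = (n:ℝ)-1-j := by
  have h1 : j ≤ n-1 := by omega
  rw [Nat.cast_sub h1, Nat.cast_sub (by omega : 1 ≤ n)]
  norm_num

lemma pnn_symm (t n : ℕ) (hn : 2*t+1 < n) (j : ℕ) (hj : j < n) :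
    pnn t n (n-1-j) = pnn t n j := by
  set m := n - (2*t+1) with hm
  unfold pnn
  rcases lt_or_ge j t with h | h
  · rw [if_pos (show t ≤ n-1-j by omega), if_neg (show ¬ t ≤ j by omega), betaBinPMF_qq,
        qq_zero t m _ (by omega)]
  · rcases le_or_gt j (t+m) with h2 | h2
    · rw [if_pos (show t ≤ n-1-j by omega), if_pos h, betaBinPMF_qq, betaBinPMF_qq,
          show n-1-j-t = m - (j-t) by omega, qq_symm t m (j-t) (by omega)]
    · rw [if_neg (show ¬ t ≤ n-1-j by omega), if_pos h, betaBinPMF_qq,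
          qq_zero t m _ (by omega)]

lemma pnn_sum (t n : ℕ) (hn : 2*t+1 < n) : ∑ j ∈ Finset.range n, pnn t n j = 1 := by
  have h := pnn_transfer t n (fun _ => 1) hn
  simp only [mul_one] at h
  rw [h, qq_sum]

lemma pnn_expmax (t n : ℕ) (hn : 2*t+1 < n) :
    ∑ j ∈ Finset.range n, pnn t n j * (((n:ℝ)-1)/2 + |(j:ℝ) - ((n:ℝ)-1)/2|)
      ≤ 19/24*((n:ℝ)-1) + 1 := by
  set m := n - (2*t+1) with hm
  have hm1 : 1 ≤ m := by omega
  have hcast : (n:ℝ) = (m:ℝ) + 2*(t:ℝ) + 1 := by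
    have : n = m + 2*t + 1 := by omega
    rw [this]; push_cast; ring
  rw [pnn_transfer t n _ hn]
  have e : ∀ i ∈ Finset.range (m+1),
      qq t m i * (((n:ℝ)-1)/2 + |((t+i:ℕ):ℝ) - ((n:ℝ)-1)/2|)
      = qq t m i * (((n:ℝ)-1)/2) + qq t m i * |(i:ℝ) - (m:ℝ)/2| := by
    intro i _
    have e2 : ((t+i:ℕ):ℝ) - ((n:ℝ)-1)/2 = (i:ℝ) - (m:ℝ)/2 := by
      push_cast
      rw [hcast]; ring
    rw [e2]; ring
  rw [Finset.sum_congr rfl e, Finset.sum_add_distrib, ← Finset.sum_mul, qq_sum, one_mul]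
  have h1 := qq_absdev t m hm1
  have h2 : (m:ℝ) ≤ (n:ℝ) - 1 := by rw [hcast]; have : (0:ℝ) ≤ t := Nat.cast_nonneg t; linarith
  linarith

lemma w_nonneg (α : ℝ) (n j : ℕ) : 0 ≤ indA1 α n j + indA2 α n j := by
  unfold indA1 indA2
  split_ifs <;> norm_num

lemma w_pair (α : ℝ) (hα0 : 0 ≤ α) (hα1 : α ≤ 1) (n j : ℕ) (hj : j < n) :
    (indA1 α n j + indA2 α n j) + (indA1 α n (n-1-j) + indA2 α n (n-1-j)) ≤ 2 := by
  have hc : ((n-1-j:ℕ):ℝ) = (n:ℝ)-1-j := cast_sub1 n j hj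
  have hc2 : (n:ℝ)-1-((n-1-j:ℕ):ℝ) = (j:ℝ) := by rw [hc]; ring
  set T := ((n:ℝ)-1)/(1+α) with hT
  have hα : (0:ℝ) < 1+α := by linarith
  have hn1 : (0:ℝ) ≤ (n:ℝ)-1 := by
    have : (1:ℝ) ≤ n := by exact_mod_cast (by omega : 1 ≤ n)
    linarith
  have hT0 : 0 ≤ T := div_nonneg hn1 (le_of_lt hα)
  have hTα : T*(1+α) = (n:ℝ)-1 := div_mul_cancel₀ _ (ne_of_gt hα)
  have h2T : (n:ℝ)-1 ≤ 2*T := by nlinarith [mul_nonneg hT0 (by linarith : (0:ℝ) ≤ 1-α)]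
  unfold indA1 indA2
  rw [hc, show (n:ℝ)-1-((n:ℝ)-1-(j:ℝ)) = (j:ℝ) by ring]
  split_ifs <;> norm_num <;> linarith

lemma contract (t n : ℕ) (hn : 2*t+1 < n) (α : ℝ) (hα0 : 0 ≤ α) (hα1 : α ≤ 1)
    (f : ℝ → ℝ) (hconc : ConcaveOn ℝ (Set.Ici 1) f) (hmono : MonotoneOn f (Set.Ici 1))
    (hf0 : ∀ x ∈ Set.Ici (1:ℝ), 0 ≤ f x) :
    ∑ j ∈ Finset.range n, pnn t n j * (indA1 α n j + indA2 α n j) * f ((j:ℝ)+1)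
      ≤ f (19/24*((n:ℝ)-1) + 2) := by
  set μ : ℝ := ((n:ℝ)-1)/2 with hμ
  have hn1 : (1:ℝ) ≤ (n:ℝ) := by exact_mod_cast (by omega : 1 ≤ n)
  have hμ0 : 0 ≤ μ := by rw [hμ]; linarith
  set z : ℕ → ℝ := fun j => μ + |(j:ℝ) - μ| + 1 with hz
  have hzmem : ∀ j, z j ∈ Set.Ici (1:ℝ) := by
    intro j
    simp only [Set.mem_Ici, hz]
    have := abs_nonneg ((j:ℝ) - μ)
    linarith
  have step1 : 2 * (∑ j ∈ Finset.range n, pnn t n j * (indA1 α n j + indA2 α n j) * f ((j:ℝ)+1))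
      ≤ 2 * ∑ j ∈ Finset.range n, pnn t n j * f (z j) := by
    have hrefl : ∑ j ∈ Finset.range n, pnn t n j * (indA1 α n j + indA2 α n j) * f ((j:ℝ)+1)
        = ∑ j ∈ Finset.range n,
            pnn t n j * (indA1 α n (n-1-j) + indA2 α n (n-1-j)) * f (((n-1-j:ℕ):ℝ)+1) := by
      conv_lhs => rw [← Finset.sum_range_reflect]
      apply Finset.sum_congr rfl
      intro j hj
      simp only [Finset.mem_range] at hj
      rw [pnn_symm t n hn j hj]
    have key : ∀ j ∈ Finset.range n,
        pnn t n j * (indA1 α n j + indA2 α n j) * f ((j:ℝ)+1)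
          + pnn t n j * (indA1 α n (n-1-j) + indA2 α n (n-1-j)) * f (((n-1-j:ℕ):ℝ)+1)
        ≤ 2 * (pnn t n j * f (z j)) := by
      intro j hj
      simp only [Finset.mem_range] at hj
      have hp := pnn_nonneg t n j
      have hw0 := w_nonneg α n j
      have hw0' := w_nonneg α n (n-1-j)
      have hpair := w_pair α hα0 hα1 n j hj
      have hxj : (j:ℝ)+1 ≤ z j := by
        simp only [hz]
        have := le_abs_self ((j:ℝ) - μ)
        linarith
      have hxj' : ((n-1-j:ℕ):ℝ)+1 ≤ z j := by
        rw [cast_sub1 n j hj]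
        simp only [hz]
        have h2 : (n:ℝ)-1-(j:ℝ) - μ = -((j:ℝ) - μ) := by simp only [hμ]; ring
        have h3 := neg_abs_le ((j:ℝ) - μ)
        linarith
      have hmemj : (j:ℝ)+1 ∈ Set.Ici (1:ℝ) := by
        simp only [Set.mem_Ici]
        have : (0:ℝ) ≤ j := Nat.cast_nonneg j
        linarith
      have hmemj' : ((n-1-j:ℕ):ℝ)+1 ∈ Set.Ici (1:ℝ) := by
        simp only [Set.mem_Ici]
        have : (0:ℝ) ≤ ((n-1-j:ℕ):ℝ) := Nat.cast_nonneg _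
        linarith
      have hfj : f ((j:ℝ)+1) ≤ f (z j) := hmono hmemj (hzmem j) hxj
      have hfj' : f (((n-1-j:ℕ):ℝ)+1) ≤ f (z j) := hmono hmemj' (hzmem j) hxj'
      have hfz0 : 0 ≤ f (z j) := hf0 _ (hzmem j)
      have A := mul_le_mul_of_nonneg_left hfj hw0
      have A' := mul_le_mul_of_nonneg_left hfj' hw0'
      have B : (indA1 α n j + indA2 α n j) * f (z j)
          + (indA1 α n (n-1-j) + indA2 α n (n-1-j)) * f (z j) ≤ 2 * f (z j) := by
        rw [← add_mul]
        exact mul_le_mul_of_nonneg_right hpair hfz0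
      have C : (indA1 α n j + indA2 α n j) * f ((j:ℝ)+1)
          + (indA1 α n (n-1-j) + indA2 α n (n-1-j)) * f (((n-1-j:ℕ):ℝ)+1) ≤ 2 * f (z j) := by
        linarith
      have := mul_le_mul_of_nonneg_left C hp
      calc pnn t n j * (indA1 α n j + indA2 α n j) * f ((j:ℝ)+1)
            + pnn t n j * (indA1 α n (n-1-j) + indA2 α n (n-1-j)) * f (((n-1-j:ℕ):ℝ)+1)
          = pnn t n j * ((indA1 α n j + indA2 α n j) * f ((j:ℝ)+1)
            + (indA1 α n (n-1-j) + indA2 α n (n-1-j)) * f (((n-1-j:ℕ):ℝ)+1)) := by ring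
        _ ≤ pnn t n j * (2 * f (z j)) := this
        _ = 2 * (pnn t n j * f (z j)) := by ring
    calc 2 * (∑ j ∈ Finset.range n, pnn t n j * (indA1 α n j + indA2 α n j) * f ((j:ℝ)+1))
        = ∑ j ∈ Finset.range n, (pnn t n j * (indA1 α n j + indA2 α n j) * f ((j:ℝ)+1)
            + pnn t n j * (indA1 α n (n-1-j) + indA2 α n (n-1-j)) * f (((n-1-j:ℕ):ℝ)+1)) := by
          rw [Finset.sum_add_distrib, ← hrefl]; ring
      _ ≤ ∑ j ∈ Finset.range n, 2 * (pnn t n j * f (z j)) := Finset.sum_le_sum key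
      _ = 2 * ∑ j ∈ Finset.range n, pnn t n j * f (z j) := by rw [← Finset.mul_sum]
  have step2 : ∑ j ∈ Finset.range n, pnn t n j * f (z j)
      ≤ f (∑ j ∈ Finset.range n, pnn t n j * z j) := by
    have := hconc.le_map_sum (fun j _ => pnn_nonneg t n j) (pnn_sum t n hn)
      (fun j _ => hzmem j)
    simpa only [smul_eq_mul] using this
  have step3 : ∑ j ∈ Finset.range n, pnn t n j * z j ≤ 19/24*((n:ℝ)-1) + 2 := by
    have e : ∀ j ∈ Finset.range n, pnn t n j * z j
        = pnn t n j * (μ + |(j:ℝ) - μ|) + pnn t n j := by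
      intro j _; simp only [hz]; ring
    rw [Finset.sum_congr rfl e, Finset.sum_add_distrib, pnn_sum t n hn]
    have := pnn_expmax t n hn
    rw [← hμ] at this
    linarith
  have hmem1 : (∑ j ∈ Finset.range n, pnn t n j * z j) ∈ Set.Ici (1:ℝ) := by
    simp only [Set.mem_Ici]
    calc (1:ℝ) = ∑ j ∈ Finset.range n, pnn t n j := (pnn_sum t n hn).symm
      _ ≤ ∑ j ∈ Finset.range n, pnn t n j * z j := by
          apply Finset.sum_le_sum
          intro j _
          have := hzmem j
          simp only [Set.mem_Ici] at this
          nth_rewrite 1 [← mul_one (pnn t n j)]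
          exact mul_le_mul_of_nonneg_left this (pnn_nonneg t n j)
  have hmem2 : (19/24*((n:ℝ)-1) + 2) ∈ Set.Ici (1:ℝ) := by
    simp only [Set.mem_Ici]; linarith
  have step4 : f (∑ j ∈ Finset.range n, pnn t n j * z j) ≤ f (19/24*((n:ℝ)-1) + 2) :=
    hmono hmem1 hmem2 step3
  linarith

lemma one_le_rpow' (x p : ℝ) (hx : 1 ≤ x) (hp : 0 ≤ p) : 1 ≤ x ^ p := by
  calc (1:ℝ) = x ^ (0:ℝ) := (Real.rpow_zero x).symm
    _ ≤ x ^ p := Real.rpow_le_rpow_of_exponent_le hx hp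


/-- **Error bound for the QuickXsort recurrence.** If `c` satisfies the QuickXsort
recurrence with median-of-`(2t+1)` pivots, buffer parameter `α ∈ [0,1]`, and a toll
function `T` with `|T n| ≤ C·n^δ` for all `n > k`, then `c(n) = O(n^δ)` when
`δ ∈ (0,1)`, and `c(n) = O(log n)` when `δ = 0`. -/
theorem quickXsort_error_bound (t : ℕ) (α : ℝ) (hα0 : 0 ≤ α) (hα1 : α ≤ 1)
    (δ : ℝ) (hδ0 : 0 ≤ δ) (hδ1 : δ < 1) (c T : ℕ → ℝ)
    (hbase : ∀ n ≤ 2 * t + 1, 0 ≤ c n)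
    (hT : ∃ C : ℝ, ∀ n, 2 * t + 1 < n → |T n| ≤ C * (n : ℝ) ^ δ)
    (hrec : ∀ n, 2 * t + 1 < n →
      c n = (∑ j ∈ Finset.range n, pnn t n j * (indA1 α n j + indA2 α n j) * c j) + T n) :
    (0 < δ → ∃ C : ℝ, ∃ N : ℕ, ∀ n ≥ N, |c n| ≤ C * (n : ℝ) ^ δ) ∧
    (δ = 0 → ∃ C : ℝ, ∃ N : ℕ, ∀ n ≥ N, |c n| ≤ C * Real.log n) := by
  obtain ⟨C₀, hC₀⟩ := hT
  set C : ℝ := |C₀| with hCdef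
  have hC : ∀ n, 2*t+1 < n → |T n| ≤ C * (n:ℝ)^δ := by
    intro n hn
    refine (hC₀ n hn).trans ?_
    have h1 : (0:ℝ) ≤ (n:ℝ)^δ := Real.rpow_nonneg (Nat.cast_nonneg n) δ
    exact mul_le_mul_of_nonneg_right (le_abs_self C₀) h1
  have hC0 : 0 ≤ C := abs_nonneg C₀
  constructor
  · -- δ > 0
    intro hδ
    have hρ : (5/6:ℝ)^δ < 1 := Real.rpow_lt_one (by norm_num) (by norm_num) hδ
    have hρ0 : (0:ℝ) ≤ (5/6:ℝ)^δ := Real.rpow_nonneg (by norm_num) δ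
    set ε : ℝ := 1 - (5/6:ℝ)^δ with hεdef
    have hε : 0 < ε := by simp only [hεdef]; linarith
    set N : ℕ := 2*t + 31 with hN
    set M : ℝ := (∑ j ∈ Finset.range (N+1), |c j|) + C/ε + 1 with hM
    have hsum0 : 0 ≤ ∑ j ∈ Finset.range (N+1), |c j| :=
      Finset.sum_nonneg fun j _ => abs_nonneg _
    have hM0 : 0 ≤ M := by
      simp only [hM]
      have : 0 ≤ C/ε := div_nonneg hC0 hε.le
      linarith
    have hMC : C ≤ M * ε := by
      have : (C/ε) * ε = C := div_mul_cancel₀ C hε.ne'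
      simp only [hM]
      nlinarith
    -- the concave test function
    set f : ℝ → ℝ := fun x => x ^ δ with hf
    have hconc : ConcaveOn ℝ (Set.Ici (1:ℝ)) f := by
      apply (Real.concaveOn_rpow hδ0 hδ1.le).subset ?_ (convex_Ici 1)
      exact Set.Ici_subset_Ici.mpr (by norm_num)
    have hmono : MonotoneOn f (Set.Ici (1:ℝ)) := by
      intro x hx y hy hxy
      simp only [Set.mem_Ici] at hx hy
      exact Real.rpow_le_rpow (by linarith) hxy hδ0
    have hf0 : ∀ x ∈ Set.Ici (1:ℝ), 0 ≤ f x := by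
      intro x hx
      simp only [Set.mem_Ici] at hx
      exact Real.rpow_nonneg (by linarith) δ
    have claim : ∀ n, |c n| ≤ M * ((n:ℝ)+1) ^ δ := by
      intro n
      induction n using Nat.strong_induction_on with
      | _ n ih =>
        have hx1 : (1:ℝ) ≤ (n:ℝ)+1 := by
          have : (0:ℝ) ≤ n := Nat.cast_nonneg n
          linarith
        have hφ1 : (1:ℝ) ≤ ((n:ℝ)+1) ^ δ := one_le_rpow' _ _ hx1 hδ0
        rcases le_or_gt n N with hle | hgt
        · have h1 : |c n| ≤ ∑ j ∈ Finset.range (N+1), |c j| :=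
            Finset.single_le_sum (f := fun j => |c j|) (fun j _ => abs_nonneg _)
              (Finset.mem_range.mpr (by omega))
          have h2 : |c n| ≤ M := by
            simp only [hM]
            have : 0 ≤ C/ε := div_nonneg hC0 hε.le
            linarith
          calc |c n| ≤ M := h2
            _ = M * 1 := (mul_one M).symm
            _ ≤ M * ((n:ℝ)+1) ^ δ := mul_le_mul_of_nonneg_left hφ1 hM0
        · have hkn : 2*t+1 < n := by omega
          have hn9 : (32:ℝ) ≤ (n:ℝ) := by exact_mod_cast (show 32 ≤ n by omega)
          rw [hrec n hkn]
          have habs : |(∑ j ∈ Finset.range n, pnn t n j * (indA1 α n j + indA2 α n j) * c j)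
              + T n| ≤ (∑ j ∈ Finset.range n,
                pnn t n j * (indA1 α n j + indA2 α n j) * |c j|) + |T n| := by
            refine (abs_add_le _ _).trans ?_
            have h1 : |∑ j ∈ Finset.range n, pnn t n j * (indA1 α n j + indA2 α n j) * c j|
                ≤ ∑ j ∈ Finset.range n, pnn t n j * (indA1 α n j + indA2 α n j) * |c j| := by
              refine (Finset.abs_sum_le_sum_abs _ _).trans ?_
              apply Finset.sum_le_sum
              intro j _
              rw [abs_mul, abs_mul, abs_of_nonneg (pnn_nonneg t n j),
                  abs_of_nonneg (w_nonneg α n j)]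
            linarith
          have hstep : ∑ j ∈ Finset.range n, pnn t n j * (indA1 α n j + indA2 α n j) * |c j|
              ≤ M * ((19/24*((n:ℝ)-1) + 2) ^ δ) := by
            have h1 : ∀ j ∈ Finset.range n,
                pnn t n j * (indA1 α n j + indA2 α n j) * |c j|
                ≤ M * (pnn t n j * (indA1 α n j + indA2 α n j) * f ((j:ℝ)+1)) := by
              intro j hj
              simp only [Finset.mem_range] at hj
              have hw := mul_nonneg (pnn_nonneg t n j) (w_nonneg α n j)
              have := mul_le_mul_of_nonneg_left (ih j hj) hw
              calc pnn t n j * (indA1 α n j + indA2 α n j) * |c j|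
                  = (pnn t n j * (indA1 α n j + indA2 α n j)) * |c j| := by ring
                _ ≤ (pnn t n j * (indA1 α n j + indA2 α n j)) * (M * ((j:ℝ)+1) ^ δ) := this
                _ = M * (pnn t n j * (indA1 α n j + indA2 α n j) * f ((j:ℝ)+1)) := by
                    simp only [hf]; ring
            calc ∑ j ∈ Finset.range n, pnn t n j * (indA1 α n j + indA2 α n j) * |c j|
                ≤ ∑ j ∈ Finset.range n,
                    M * (pnn t n j * (indA1 α n j + indA2 α n j) * f ((j:ℝ)+1)) :=
                  Finset.sum_le_sum h1
              _ = M * ∑ j ∈ Finset.range n,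
                    pnn t n j * (indA1 α n j + indA2 α n j) * f ((j:ℝ)+1) := by
                  rw [← Finset.mul_sum]
              _ ≤ M * ((19/24*((n:ℝ)-1) + 2) ^ δ) := by
                  apply mul_le_mul_of_nonneg_left ?_ hM0
                  exact contract t n hkn α hα0 hα1 f hconc hmono hf0
          have hcontr : (19/24*((n:ℝ)-1) + 2) ^ δ ≤ (1-ε) * ((n:ℝ)+1) ^ δ := by
            have h1 : 19/24*((n:ℝ)-1) + 2 ≤ 5/6*((n:ℝ)+1) := by linarith
            have h2 : (0:ℝ) ≤ 19/24*((n:ℝ)-1) + 2 := by linarith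
            calc (19/24*((n:ℝ)-1) + 2) ^ δ ≤ (5/6*((n:ℝ)+1)) ^ δ :=
                Real.rpow_le_rpow h2 h1 hδ0
              _ = (5/6:ℝ)^δ * ((n:ℝ)+1)^δ := Real.mul_rpow (by norm_num) (by linarith)
              _ = (1-ε) * ((n:ℝ)+1)^δ := by simp only [hεdef]; ring
          have hTn : |T n| ≤ M * ε * ((n:ℝ)+1) ^ δ := by
            refine (hC n hkn).trans ?_
            have h1 : (n:ℝ)^δ ≤ ((n:ℝ)+1)^δ :=
              Real.rpow_le_rpow (Nat.cast_nonneg n) (by linarith) hδ0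
            have h2 : C * (n:ℝ)^δ ≤ C * ((n:ℝ)+1)^δ := mul_le_mul_of_nonneg_left h1 hC0
            have h3 : C * ((n:ℝ)+1)^δ ≤ (M*ε) * ((n:ℝ)+1)^δ :=
              mul_le_mul_of_nonneg_right hMC (by linarith)
            linarith
          calc |(∑ j ∈ Finset.range n, pnn t n j * (indA1 α n j + indA2 α n j) * c j) + T n|
              ≤ (∑ j ∈ Finset.range n, pnn t n j * (indA1 α n j + indA2 α n j) * |c j|)
                + |T n| := habs
            _ ≤ M * ((19/24*((n:ℝ)-1) + 2) ^ δ) + M * ε * ((n:ℝ)+1) ^ δ :=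
                add_le_add hstep hTn
            _ ≤ M * ((1-ε) * ((n:ℝ)+1) ^ δ) + M * ε * ((n:ℝ)+1) ^ δ :=
                add_le_add (mul_le_mul_of_nonneg_left hcontr hM0) le_rfl
            _ = M * ((n:ℝ)+1) ^ δ := by ring
    refine ⟨2*M, 1, fun n hn => ?_⟩
    have hn1 : (1:ℝ) ≤ (n:ℝ) := by exact_mod_cast hn
    have h1 : ((n:ℝ)+1) ^ δ ≤ (2*(n:ℝ)) ^ δ :=
      Real.rpow_le_rpow (by linarith) (by linarith) hδ0
    have h2 : (2*(n:ℝ))^δ = 2^δ * (n:ℝ)^δ := Real.mul_rpow (by norm_num) (by linarith)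
    have h3 : (2:ℝ)^δ ≤ 2 := by
      calc (2:ℝ)^δ ≤ (2:ℝ)^(1:ℝ) :=
          Real.rpow_le_rpow_of_exponent_le (by norm_num) hδ1.le
        _ = 2 := Real.rpow_one 2
    have h4 : (0:ℝ) ≤ (n:ℝ)^δ := Real.rpow_nonneg (by linarith) δ
    calc |c n| ≤ M * ((n:ℝ)+1) ^ δ := claim n
      _ ≤ M * (2^δ * (n:ℝ)^δ) := by
          rw [← h2]; exact mul_le_mul_of_nonneg_left h1 hM0
      _ ≤ M * (2 * (n:ℝ)^δ) :=
          mul_le_mul_of_nonneg_left (mul_le_mul_of_nonneg_right h3 h4) hM0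
      _ = 2*M * (n:ℝ)^δ := by ring
  · -- δ = 0
    intro hδz
    subst hδz
    have hC' : ∀ n, 2*t+1 < n → |T n| ≤ C := by
      intro n hn
      have := hC n hn
      rwa [Real.rpow_zero, mul_one] at this
    set η : ℝ := Real.log (6/5) with hηdef
    have hη : 0 < η := Real.log_pos (by norm_num)
    set N : ℕ := 2*t + 33 with hN
    set M : ℝ := 2*(∑ j ∈ Finset.range (N+1), |c j|) + C/η + 2 with hM
    have hsum0 : 0 ≤ ∑ j ∈ Finset.range (N+1), |c j| :=
      Finset.sum_nonneg fun j _ => abs_nonneg _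
    have hM0 : 0 ≤ M := by
      simp only [hM]
      have : 0 ≤ C/η := div_nonneg hC0 hη.le
      linarith
    have hMC : C ≤ M * η := by
      have : (C/η) * η = C := div_mul_cancel₀ C hη.ne'
      simp only [hM]
      nlinarith
    set f : ℝ → ℝ := fun x => Real.log (x+1) with hf
    have hconc : ConcaveOn ℝ (Set.Ici (1:ℝ)) f := by
      refine ⟨convex_Ici 1, ?_⟩
      intro x hx y hy a b ha hb hab
      simp only [Set.mem_Ici] at hx hy
      have hx1 : x + 1 ∈ Set.Ioi (0:ℝ) := by simp only [Set.mem_Ioi]; linarith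
      have hy1 : y + 1 ∈ Set.Ioi (0:ℝ) := by simp only [Set.mem_Ioi]; linarith
      have hlc := strictConcaveOn_log_Ioi.concaveOn.2 hx1 hy1 ha hb hab
      simp only [smul_eq_mul] at hlc ⊢
      simp only [hf]
      calc a * Real.log (x+1) + b * Real.log (y+1)
          ≤ Real.log (a*(x+1) + b*(y+1)) := hlc
        _ = Real.log (a*x + b*y + 1) := by
            rw [show a*(x+1) + b*(y+1) = a*x + b*y + (a+b) by ring, hab]
    have hmono : MonotoneOn f (Set.Ici (1:ℝ)) := by
      intro x hx y hy hxy
      simp only [Set.mem_Ici] at hx hy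
      simp only [hf]
      exact Real.log_le_log (by linarith) (by linarith)
    have hf0 : ∀ x ∈ Set.Ici (1:ℝ), 0 ≤ f x := by
      intro x hx
      simp only [Set.mem_Ici] at hx
      exact Real.log_nonneg (by linarith)
    have hlog2 : (1/2:ℝ) ≤ Real.log 2 := by
      have := Real.log_two_gt_d9
      linarith
    have claim : ∀ n, |c n| ≤ M * Real.log ((n:ℝ)+2) := by
      intro n
      induction n using Nat.strong_induction_on with
      | _ n ih =>
        have hx1 : (2:ℝ) ≤ (n:ℝ)+2 := by
          have : (0:ℝ) ≤ n := Nat.cast_nonneg n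
          linarith
        have hφ1 : (1/2:ℝ) ≤ Real.log ((n:ℝ)+2) := by
          refine hlog2.trans (Real.log_le_log (by norm_num) hx1)
        rcases le_or_gt n N with hle | hgt
        · have h1 : |c n| ≤ ∑ j ∈ Finset.range (N+1), |c j| :=
            Finset.single_le_sum (f := fun j => |c j|) (fun j _ => abs_nonneg _)
              (Finset.mem_range.mpr (by omega))
          have hCη : 0 ≤ C/η := div_nonneg hC0 hη.le
          calc |c n| ≤ ∑ j ∈ Finset.range (N+1), |c j| := h1
            _ ≤ M * (1/2) := by simp only [hM]; linarith
            _ ≤ M * Real.log ((n:ℝ)+2) := mul_le_mul_of_nonneg_left hφ1 hM0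
        · have hkn : 2*t+1 < n := by omega
          have hn9 : (34:ℝ) ≤ (n:ℝ) := by exact_mod_cast (show 34 ≤ n by omega)
          rw [hrec n hkn]
          have habs : |(∑ j ∈ Finset.range n, pnn t n j * (indA1 α n j + indA2 α n j) * c j)
              + T n| ≤ (∑ j ∈ Finset.range n,
                pnn t n j * (indA1 α n j + indA2 α n j) * |c j|) + |T n| := by
            refine (abs_add_le _ _).trans ?_
            have h1 : |∑ j ∈ Finset.range n, pnn t n j * (indA1 α n j + indA2 α n j) * c j|
                ≤ ∑ j ∈ Finset.range n, pnn t n j * (indA1 α n j + indA2 α n j) * |c j| := by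
              refine (Finset.abs_sum_le_sum_abs _ _).trans ?_
              apply Finset.sum_le_sum
              intro j _
              rw [abs_mul, abs_mul, abs_of_nonneg (pnn_nonneg t n j),
                  abs_of_nonneg (w_nonneg α n j)]
            linarith
          have hstep : ∑ j ∈ Finset.range n, pnn t n j * (indA1 α n j + indA2 α n j) * |c j|
              ≤ M * (f (19/24*((n:ℝ)-1) + 2)) := by
            have h1 : ∀ j ∈ Finset.range n,
                pnn t n j * (indA1 α n j + indA2 α n j) * |c j|
                ≤ M * (pnn t n j * (indA1 α n j + indA2 α n j) * f ((j:ℝ)+1)) := by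
              intro j hj
              simp only [Finset.mem_range] at hj
              have hw := mul_nonneg (pnn_nonneg t n j) (w_nonneg α n j)
              have hihj : |c j| ≤ M * Real.log ((j:ℝ)+2) := ih j hj
              have hfj : f ((j:ℝ)+1) = Real.log ((j:ℝ)+2) := by
                simp only [hf]; rw [show (j:ℝ)+1+1 = (j:ℝ)+2 by ring]
              have := mul_le_mul_of_nonneg_left hihj hw
              calc pnn t n j * (indA1 α n j + indA2 α n j) * |c j|
                  = (pnn t n j * (indA1 α n j + indA2 α n j)) * |c j| := by ring
                _ ≤ (pnn t n j * (indA1 α n j + indA2 α n j)) * (M * Real.log ((j:ℝ)+2)) :=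
                    this
                _ = M * (pnn t n j * (indA1 α n j + indA2 α n j) * f ((j:ℝ)+1)) := by
                    rw [hfj]; ring
            calc ∑ j ∈ Finset.range n, pnn t n j * (indA1 α n j + indA2 α n j) * |c j|
                ≤ ∑ j ∈ Finset.range n,
                    M * (pnn t n j * (indA1 α n j + indA2 α n j) * f ((j:ℝ)+1)) :=
                  Finset.sum_le_sum h1
              _ = M * ∑ j ∈ Finset.range n,
                    pnn t n j * (indA1 α n j + indA2 α n j) * f ((j:ℝ)+1) := by
                  rw [← Finset.mul_sum]
              _ ≤ M * (f (19/24*((n:ℝ)-1) + 2)) := by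
                  apply mul_le_mul_of_nonneg_left ?_ hM0
                  exact contract t n hkn α hα0 hα1 f hconc hmono hf0
          have hcontr : f (19/24*((n:ℝ)-1) + 2) ≤ Real.log ((n:ℝ)+2) - η := by
            simp only [hf]
            have h1 : 19/24*((n:ℝ)-1) + 2 + 1 ≤ 5/6*((n:ℝ)+2) := by linarith
            have h2 : (0:ℝ) < 19/24*((n:ℝ)-1) + 2 + 1 := by linarith
            have h3 : Real.log (19/24*((n:ℝ)-1) + 2 + 1) ≤ Real.log (5/6*((n:ℝ)+2)) :=
              Real.log_le_log h2 h1
            have h4 : Real.log (5/6*((n:ℝ)+2)) = Real.log (5/6) + Real.log ((n:ℝ)+2) :=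
              Real.log_mul (by norm_num) (by linarith)
            have h5 : Real.log (5/6:ℝ) = -η := by
              rw [hηdef, show (5/6:ℝ) = (6/5:ℝ)⁻¹ by norm_num, Real.log_inv]
            linarith
          have hTn : |T n| ≤ M * η := (hC' n hkn).trans hMC
          calc |(∑ j ∈ Finset.range n, pnn t n j * (indA1 α n j + indA2 α n j) * c j) + T n|
              ≤ (∑ j ∈ Finset.range n, pnn t n j * (indA1 α n j + indA2 α n j) * |c j|)
                + |T n| := habs
            _ ≤ M * (Real.log ((n:ℝ)+2) - η) + M * η :=
                add_le_add ((hstep).trans (mul_le_mul_of_nonneg_left hcontr hM0)) hTn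
            _ = M * Real.log ((n:ℝ)+2) := by ring
    refine ⟨2*M, 3, fun n hn => ?_⟩
    have hn3 : (3:ℝ) ≤ (n:ℝ) := by exact_mod_cast hn
    have h1 : (n:ℝ)+2 ≤ (n:ℝ)^2 := by nlinarith
    have h2 : Real.log ((n:ℝ)+2) ≤ Real.log ((n:ℝ)^2) := Real.log_le_log (by linarith) h1
    have h3 : Real.log ((n:ℝ)^2) = 2 * Real.log (n:ℝ) := by
      rw [Real.log_pow]
      norm_num
    calc |c n| ≤ M * Real.log ((n:ℝ)+2) := claim n
      _ ≤ M * (2 * Real.log (n:ℝ)) := by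
          rw [← h3]; exact mul_le_mul_of_nonneg_left h2 hM0
      _ = 2*M * Real.log (n:ℝ) := by ring
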